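/- Let α ≥ 1 and suppose f is analytic on the punctured unit disc E with simple pole at 0 and Re(z f(z)) > α |z² f'(z) + z f(z)| for all z ∈ E. Then Re(z² f'(z)) < 0 for all z ∈ E. -/

import Mathlib

open Complex Metric

theorem stmt10 (α : ℝ) (hα : 1 ≤ α) (g : ℂ → ℂ)
    (hg : AnalyticOn ℂ g (ball (0:ℂ) 1))
    (f : ℂ → ℂ) (hf : ∀ z : ℂ, z ≠ 0 → f z = z⁻¹ + g z)
    (hME : ∀ z : ℂ, 0 < ‖z‖ → ‖z‖ < 1 →
      (z * f z).re > α * ‖z ^ 2 * deriv f z + z * f z‖) :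
    ∀ z : ℂ, 0 < ‖z‖ → ‖z‖ < 1 →
      (z ^ 2 * deriv f z).re < 0 := by
  intro z h1 h2
  have h := hME z h1 h2
  have hre : (z ^ 2 * deriv f z + z * f z).re ≤
      ‖z ^ 2 * deriv f z + z * f z‖ := Complex.re_le_norm _
  have habs : ‖z ^ 2 * deriv f z + z * f z‖ ≤
      α * ‖z ^ 2 * deriv f z + z * f z‖ := by
    nlinarith [norm_nonneg (z ^ 2 * deriv f z + z * f z)]
  have : (z ^ 2 * deriv f z).re + (z * f z).re < (z * f z).re := by
    rw [← Complex.add_re]; linarith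
  linarith
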